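/- The partial derivative of the call price C with respect to the current time t (the Theta) equals -(sσ + αe^{rt})·e^{-(d_{t,1}^α)²/2}/(2√(2π(T-t))) - rKe^{-r(T-t)}Φ(d_{t,2}^α) + (rα/σ)e^{rt}(Φ(d_{t,1}^α) - Φ(d_{t,2}^α)). -/
import Mathlib


open Real

/-- Standard normal CDF. -/
noncomputable def Phi (d : ℝ) : ℝ :=
  ∫ u in Set.Iic d, Real.exp (-u ^ 2 / 2) / Real.sqrt (2 * Real.pi)

/-- d_{t,1}^α of the crisis model. -/
noncomputable def d1 (s K σ α r t T : ℝ) : ℝ :=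
  (Real.log ((s + α / σ * Real.exp (r * t)) / (K + α / σ * Real.exp (r * T)))
    + (r + σ ^ 2 / 2) * (T - t)) / (σ * Real.sqrt (T - t))

/-- d_{t,2}^α of the crisis model. -/
noncomputable def d2 (s K σ α r t T : ℝ) : ℝ :=
  d1 s K σ α r t T - σ * Real.sqrt (T - t)

/-- Crisis-model European call price. -/
noncomputable def C (s K σ α r t T : ℝ) : ℝ :=
  (s + α / σ * Real.exp (r * t)) * Phi (d1 s K σ α r t T)
    - (K * Real.exp (-r * (T - t)) + α / σ * Real.exp (r * t)) * Phi (d2 s K σ α r t T)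

open MeasureTheory in
lemma gauss_integrable :
    Integrable (fun u : ℝ => Real.exp (-u ^ 2 / 2) / Real.sqrt (2 * Real.pi)) := by
  have h : Integrable (fun u : ℝ => Real.exp (-(1/2 : ℝ) * u ^ 2)) :=
    integrable_exp_neg_mul_sq (by norm_num)
  have := h.div_const (Real.sqrt (2 * Real.pi))
  convert this using 2 with u
  ring_nf

lemma Phi_hasDerivAt (x : ℝ) :
    HasDerivAt Phi (Real.exp (-x ^ 2 / 2) / Real.sqrt (2 * Real.pi)) x := by
  set f : ℝ → ℝ := fun u => Real.exp (-u ^ 2 / 2) / Real.sqrt (2 * Real.pi) with hf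
  have hint := gauss_integrable
  have hcont : Continuous f := by
    apply Continuous.div_const
    exact (continuous_pow 2).neg.div_const 2 |>.rexp
  have hkey : ∀ y : ℝ, Phi y = Phi 0 + ∫ u in (0:ℝ)..y, f u := by
    intro y
    rw [← intervalIntegral.integral_Iic_sub_Iic hint.integrableOn hint.integrableOn]
    simp [Phi]
  have hD : HasDerivAt (fun y => Phi 0 + ∫ u in (0:ℝ)..y, f u) (f x) x := by
    exact (intervalIntegral.integral_hasDerivAt_right hint.intervalIntegrable
      ((hcont.stronglyMeasurableAtFilter _ _)) (hcont.continuousAt)).const_add (Phi 0)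
  have : (fun y => Phi 0 + ∫ u in (0:ℝ)..y, f u) = Phi := by
    funext y; rw [hkey y]
  rwa [this] at hD

set_option maxHeartbeats 4000000 in
/-- Theta of the crisis-model call. -/
theorem crisis_theta (s K σ α r t T : ℝ)
    (hs : 0 < s) (hK : 0 < K) (hσ : 0 < σ) (hα : 0 ≤ α)
    (ht : 0 ≤ t) (htT : t < T)
    (h1 : 0 < s + α / σ * Real.exp (r * t))
    (h2 : 0 < K + α / σ * Real.exp (r * T)) :
    HasDerivAt (fun u => C s K σ α r u T)
      (-((s * σ + α * Real.exp (r * t)) * Real.exp (-(d1 s K σ α r t T) ^ 2 / 2) /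
          (2 * Real.sqrt (2 * Real.pi * (T - t))))
        - r * K * Real.exp (-r * (T - t)) * Phi (d2 s K σ α r t T)
        + r * α / σ * Real.exp (r * t) *
          (Phi (d1 s K σ α r t T) - Phi (d2 s K σ α r t T))) t := by
  have hσ' : σ ≠ 0 := ne_of_gt hσ
  have hτ : 0 < T - t := sub_pos.mpr htT
  have hsτ : 0 < Real.sqrt (T - t) := Real.sqrt_pos.mpr hτ
  have hsτ' : Real.sqrt (T - t) ≠ 0 := ne_of_gt hsτ
  have hAB : 0 < (s + α / σ * Real.exp (r * t)) / (K + α / σ * Real.exp (r * T)) :=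
    div_pos h1 h2
  -- basic derivatives
  have hexp : HasDerivAt (fun u => Real.exp (r * u)) (Real.exp (r * t) * r) t := by
    simpa using ((hasDerivAt_id t).const_mul r).exp
  have hfA : HasDerivAt (fun u => s + α / σ * Real.exp (r * u))
      (α / σ * (Real.exp (r * t) * r)) t := (hexp.const_mul (α / σ)).const_add s
  have hsub : HasDerivAt (fun u => T - u) (-1) t := (hasDerivAt_id t).const_sub T
  have hsq : HasDerivAt (fun u => Real.sqrt (T - u))
      (1 / (2 * Real.sqrt (T - t)) * -1) t :=
    (Real.hasDerivAt_sqrt (ne_of_gt hτ)).comp t hsub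
  have hden : HasDerivAt (fun u => σ * Real.sqrt (T - u))
      (σ * (1 / (2 * Real.sqrt (T - t)) * -1)) t := hsq.const_mul σ
  have hdiv : HasDerivAt
      (fun u => (s + α / σ * Real.exp (r * u)) / (K + α / σ * Real.exp (r * T)))
      (α / σ * (Real.exp (r * t) * r) / (K + α / σ * Real.exp (r * T))) t :=
    hfA.div_const _
  have hlog : HasDerivAt
      (fun u => Real.log ((s + α / σ * Real.exp (r * u)) / (K + α / σ * Real.exp (r * T))))
      ((α / σ * (Real.exp (r * t) * r) / (K + α / σ * Real.exp (r * T))) /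
        ((s + α / σ * Real.exp (r * t)) / (K + α / σ * Real.exp (r * T)))) t :=
    hdiv.log (ne_of_gt hAB)
  have hnum : HasDerivAt
      (fun u => Real.log ((s + α / σ * Real.exp (r * u)) / (K + α / σ * Real.exp (r * T)))
        + (r + σ ^ 2 / 2) * (T - u))
      ((α / σ * (Real.exp (r * t) * r) / (K + α / σ * Real.exp (r * T))) /
        ((s + α / σ * Real.exp (r * t)) / (K + α / σ * Real.exp (r * T)))
        + (r + σ ^ 2 / 2) * -1) t :=
    hlog.add (hsub.const_mul _)
  set N : ℝ := Real.log ((s + α / σ * Real.exp (r * t)) / (K + α / σ * Real.exp (r * T)))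
      + (r + σ ^ 2 / 2) * (T - t) with hN
  set N' : ℝ := (α / σ * (Real.exp (r * t) * r) / (K + α / σ * Real.exp (r * T))) /
        ((s + α / σ * Real.exp (r * t)) / (K + α / σ * Real.exp (r * T)))
        + (r + σ ^ 2 / 2) * -1 with hN'
  set M' : ℝ := σ * (1 / (2 * Real.sqrt (T - t)) * -1) with hM'
  set V : ℝ := (N' * (σ * Real.sqrt (T - t)) - N * M') / (σ * Real.sqrt (T - t)) ^ 2 with hV
  have hd1 : HasDerivAt (fun u => d1 s K σ α r u T) V t := by
    simp only [d1]
    exact hnum.div hden (mul_ne_zero hσ' hsτ')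
  have hd2 : HasDerivAt (fun u => d2 s K σ α r u T) (V - M') t := by
    simp only [d2]
    exact hd1.sub hden
  have hP1 : HasDerivAt (fun u => Phi (d1 s K σ α r u T))
      (Real.exp (-(d1 s K σ α r t T) ^ 2 / 2) / Real.sqrt (2 * Real.pi) * V) t :=
    (Phi_hasDerivAt _).comp t hd1
  have hP2 : HasDerivAt (fun u => Phi (d2 s K σ α r u T))
      (Real.exp (-(d2 s K σ α r t T) ^ 2 / 2) / Real.sqrt (2 * Real.pi) * (V - M')) t :=
    (Phi_hasDerivAt _).comp t hd2
  have hterm1 : HasDerivAt (fun u => (s + α / σ * Real.exp (r * u)) * Phi (d1 s K σ α r u T))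
      (α / σ * (Real.exp (r * t) * r) * Phi (d1 s K σ α r t T)
        + (s + α / σ * Real.exp (r * t)) *
          (Real.exp (-(d1 s K σ α r t T) ^ 2 / 2) / Real.sqrt (2 * Real.pi) * V)) t :=
    hfA.mul hP1
  have hinner : HasDerivAt (fun u => -r * (T - u)) (-r * -1) t := hsub.const_mul (-r)
  have hcoef : HasDerivAt
      (fun u => K * Real.exp (-r * (T - u)) + α / σ * Real.exp (r * u))
      (K * (Real.exp (-r * (T - t)) * (-r * -1)) + α / σ * (Real.exp (r * t) * r)) t :=
    (hinner.exp.const_mul K).add (hexp.const_mul (α / σ))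
  have hterm2 : HasDerivAt
      (fun u => (K * Real.exp (-r * (T - u)) + α / σ * Real.exp (r * u)) * Phi (d2 s K σ α r u T))
      ((K * (Real.exp (-r * (T - t)) * (-r * -1)) + α / σ * (Real.exp (r * t) * r)) *
          Phi (d2 s K σ α r t T)
        + (K * Real.exp (-r * (T - t)) + α / σ * Real.exp (r * t)) *
          (Real.exp (-(d2 s K σ α r t T) ^ 2 / 2) / Real.sqrt (2 * Real.pi) * (V - M'))) t :=
    hcoef.mul hP2
  have hC : HasDerivAt (fun u => C s K σ α r u T)
      (α / σ * (Real.exp (r * t) * r) * Phi (d1 s K σ α r t T)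
        + (s + α / σ * Real.exp (r * t)) *
          (Real.exp (-(d1 s K σ α r t T) ^ 2 / 2) / Real.sqrt (2 * Real.pi) * V)
        - ((K * (Real.exp (-r * (T - t)) * (-r * -1)) + α / σ * (Real.exp (r * t) * r)) *
            Phi (d2 s K σ α r t T)
          + (K * Real.exp (-r * (T - t)) + α / σ * Real.exp (r * t)) *
            (Real.exp (-(d2 s K σ α r t T) ^ 2 / 2) / Real.sqrt (2 * Real.pi) * (V - M')))) t := by
    simp only [C]
    exact hterm1.sub hterm2
  -- key exponential identity
  have hsq2 : Real.sqrt (T - t) ^ 2 = T - t := Real.sq_sqrt hτ.le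
  have hD1mul : d1 s K σ α r t T * (σ * Real.sqrt (T - t)) = N := by
    rw [d1, ← hN, div_mul_cancel₀]
    exact mul_ne_zero hσ' hsτ'
  have harg : -(d2 s K σ α r t T) ^ 2 / 2 = -(d1 s K σ α r t T) ^ 2 / 2
      + (Real.log ((s + α / σ * Real.exp (r * t)) / (K + α / σ * Real.exp (r * T)))
        + r * (T - t)) := by
    rw [d2]
    rw [hN] at hD1mul
    linear_combination hD1mul - σ ^ 2 / 2 * hsq2
  have hQ : Real.exp (-(d2 s K σ α r t T) ^ 2 / 2)
      = Real.exp (-(d1 s K σ α r t T) ^ 2 / 2) *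
        ((s + α / σ * Real.exp (r * t)) / (K + α / σ * Real.exp (r * T)) *
          Real.exp (r * (T - t))) := by
    rw [harg, Real.exp_add, Real.exp_add, Real.exp_log hAB]
  have hF : Real.exp (r * T) = Real.exp (r * t) * Real.exp (r * (T - t)) := by
    rw [← Real.exp_add]; congr 1; ring
  have hG : Real.exp (-r * (T - t)) = (Real.exp (r * (T - t)))⁻¹ := by
    rw [← Real.exp_neg]; congr 1; ring
  have h2pi : Real.sqrt (2 * Real.pi * (T - t)) = Real.sqrt (2 * Real.pi) * Real.sqrt (T - t) :=
    Real.sqrt_mul (by positivity) _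
  have hSP : Real.sqrt (2 * Real.pi) ≠ 0 := by positivity
  have hH : Real.exp (r * (T - t)) ≠ 0 := Real.exp_ne_zero _
  have hB' : K + α / σ * (Real.exp (r * t) * Real.exp (r * (T - t))) ≠ 0 := by
    rw [← hF]; exact ne_of_gt h2
  have hval : (-((s * σ + α * Real.exp (r * t)) * Real.exp (-(d1 s K σ α r t T) ^ 2 / 2) /
          (2 * Real.sqrt (2 * Real.pi * (T - t))))
        - r * K * Real.exp (-r * (T - t)) * Phi (d2 s K σ α r t T)
        + r * α / σ * Real.exp (r * t) *
          (Phi (d1 s K σ α r t T) - Phi (d2 s K σ α r t T)))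
      = (α / σ * (Real.exp (r * t) * r) * Phi (d1 s K σ α r t T)
        + (s + α / σ * Real.exp (r * t)) *
          (Real.exp (-(d1 s K σ α r t T) ^ 2 / 2) / Real.sqrt (2 * Real.pi) * V)
        - ((K * (Real.exp (-r * (T - t)) * (-r * -1)) + α / σ * (Real.exp (r * t) * r)) *
            Phi (d2 s K σ α r t T)
          + (K * Real.exp (-r * (T - t)) + α / σ * Real.exp (r * t)) *
            (Real.exp (-(d2 s K σ α r t T) ^ 2 / 2) / Real.sqrt (2 * Real.pi) * (V - M')))) := by
    rw [hQ, hF, hG, h2pi, hM']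
    set_option maxHeartbeats 2000000 in
    field_simp
    ring
  rw [hval]
  exact hC
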